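/- Let K be a differential field with constants C, let L be a differential field extension of K whose field of constants is the algebraic closure of C, and let D be an algebraic extension of C inside that algebraic closure. Then the canonical map D ⊗_C K → L, d ⊗ f ↦ df, is an injective homomorphism of differential rings (i.e., a differential field embedding). -/

import Mathlib

open TensorProduct

/-- Let K be a differential field with constants C, let L be a differential
field extension of K whose field of constants is the algebraic closure of C (its
constants are algebraic over C and algebraically closed), and let D be an algebraic
extension of C inside the constants of L. Then the canonical map D ⊗_C K → L,
d ⊗ f ↦ df, is an injective homomorphism of differential rings (a differential field
embedding), where the derivation on D ⊗_C K is id_D ⊗ ∂_K. -/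
theorem stmt_6 (C K D L : Type) [Field C] [CharZero C] [Field K] [Field D] [Field L]
    [Algebra C K] [Algebra C D] [Algebra C L] [Algebra K L] [Algebra D L]
    [IsScalarTower C K L] [IsScalarTower C D L] [Algebra.IsAlgebraic C D]
    (dK : K →ₗ[C] K) (dL : L → L)
    (hdK_mul : ∀ a b : K, dK (a * b) = a * dK b + dK a * b)
    (hdL_add : ∀ a b : L, dL (a + b) = dL a + dL b)
    (hdL_mul : ∀ a b : L, dL (a * b) = a * dL b + dL a * b)
    (hcompat : ∀ x : K, dL (algebraMap K L x) = algebraMap K L (dK x))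
    (hKconst : ∀ x : K, dK x = 0 ↔ ∃ c : C, x = algebraMap C K c)
    (hDconst : ∀ x : D, dL (algebraMap D L x) = 0)
    (hLconst_alg : ∀ y : L, dL y = 0 → IsAlgebraic C y)
    (hLconst_closed : ∀ p : Polynomial L, (∀ i, dL (p.coeff i) = 0) → 0 < p.degree →
      ∃ y : L, dL y = 0 ∧ p.eval y = 0) :
    Function.Injective
      (Algebra.TensorProduct.productMap (IsScalarTower.toAlgHom C D L)
        (IsScalarTower.toAlgHom C K L)) ∧
    ∀ t : D ⊗[C] K,
      Algebra.TensorProduct.productMap (IsScalarTower.toAlgHom C D L)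
          (IsScalarTower.toAlgHom C K L) ((LinearMap.lTensor D dK) t) =
        dL (Algebra.TensorProduct.productMap (IsScalarTower.toAlgHom C D L)
          (IsScalarTower.toAlgHom C K L) t) := by
  classical
  set φ := IsScalarTower.toAlgHom C D L with hφ
  set ψ := IsScalarTower.toAlgHom C K L with hψ
  set F := Algebra.TensorProduct.productMap φ ψ with hF
  -- basic facts about the derivations
  have hdL0 : dL 0 = 0 := by
    have h := hdL_add 0 0
    rw [add_zero] at h
    exact right_eq_add.mp h
  have hdK1 : dK (1 : K) = 0 := by
    have h := hdK_mul 1 1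
    simp only [mul_one, one_mul] at h
    exact right_eq_add.mp h
  -- dL as an additive monoid hom, to move it through finite sums
  let δ : L →+ L := AddMonoidHom.mk' dL hdL_add
  have hδ : ∀ x : L, δ x = dL x := fun _ => rfl
  -- Key lemma: a C-linearly independent family in D maps to a K-linearly independent
  -- family in L.
  have li : ∀ {ι : Type} (v : ι → D), LinearIndependent C v →
      LinearIndependent K (fun i => algebraMap D L (v i)) := by
    intro ι v hv
    rw [linearIndependent_iff']
    intro s
    induction s using Finset.strongInduction with
    | _ s ih =>
      intro g hg
      by_contra hcon
      push_neg at hcon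
      obtain ⟨j, hjs, hgj⟩ := hcon
      set g' : ι → K := fun i => (g j)⁻¹ * g i with hg'
      have hg'j : g' j = 1 := inv_mul_cancel₀ hgj
      have hsum : ∑ i ∈ s, algebraMap K L (g' i) * algebraMap D L (v i) = 0 := by
        have h2 : ∑ i ∈ s, algebraMap K L (g' i) * algebraMap D L (v i)
            = algebraMap K L (g j)⁻¹ * ∑ i ∈ s, g i • algebraMap D L (v i) := by
          rw [Finset.mul_sum]
          refine Finset.sum_congr rfl fun i _ => ?_
          rw [Algebra.smul_def, hg', map_mul, mul_assoc]
        rw [h2, hg, mul_zero]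
      -- differentiate the relation
      have hder : ∑ i ∈ s, dK (g' i) • algebraMap D L (v i) = 0 := by
        have h3 := congrArg dL hsum
        rw [hdL0] at h3
        have h4 : dL (∑ i ∈ s, algebraMap K L (g' i) * algebraMap D L (v i))
            = ∑ i ∈ s, dL (algebraMap K L (g' i) * algebraMap D L (v i)) := by
          rw [← hδ, map_sum]
          exact Finset.sum_congr rfl fun i _ => (hδ _)
        rw [h4] at h3
        calc ∑ i ∈ s, dK (g' i) • algebraMap D L (v i)
            = ∑ i ∈ s, dL (algebraMap K L (g' i) * algebraMap D L (v i)) := by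
              refine Finset.sum_congr rfl fun i _ => ?_
              rw [hdL_mul, hDconst, mul_zero, zero_add, hcompat, Algebra.smul_def]
          _ = 0 := h3
      have hjz : dK (g' j) = 0 := by rw [hg'j, hdK1]
      have herase : ∑ i ∈ s.erase j, dK (g' i) • algebraMap D L (v i) = 0 := by
        rw [Finset.sum_erase_eq_sub hjs, hder, hjz, zero_smul, sub_zero]
      have hall : ∀ i ∈ s.erase j, dK (g' i) = 0 :=
        ih (s.erase j) (Finset.erase_ssubset hjs) (fun i => dK (g' i)) herase
      have hallS : ∀ i ∈ s, dK (g' i) = 0 := by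
        intro i hi
        rcases eq_or_ne i j with rfl | hne
        · exact hjz
        · exact hall i (Finset.mem_erase.mpr ⟨hne, hi⟩)
      have hCc : ∀ i ∈ s, ∃ c : C, g' i = algebraMap C K c :=
        fun i hi => (hKconst _).mp (hallS i hi)
      choose c hc using hCc
      set c' : ι → C := fun i => if h : i ∈ s then c i h else 0 with hc'
      have hgc : ∀ i ∈ s, g' i = algebraMap C K (c' i) := by
        intro i hi
        have hci : c' i = c i hi := dif_pos hi
        rw [hci]
        exact hc i hi
      have hDsum : algebraMap D L (∑ i ∈ s, c' i • v i) = 0 := by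
        rw [map_sum, ← hsum]
        refine Finset.sum_congr rfl fun i hi => ?_
        rw [Algebra.smul_def, map_mul, ← IsScalarTower.algebraMap_apply C D L,
          hgc i hi, ← IsScalarTower.algebraMap_apply C K L]
      have hD0 : ∑ i ∈ s, c' i • v i = 0 := by
        apply (algebraMap D L).injective
        rw [hDsum, map_zero]
      have hc0 : ∀ i ∈ s, c' i = 0 := linearIndependent_iff'.mp hv s c' hD0
      have h1 : (1 : K) = 0 := by
        rw [← hg'j, hgc j hjs, hc0 j hjs, map_zero]
      exact one_ne_zero h1
  -- the "swapped" product map on K ⊗ D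
  set G := Algebra.TensorProduct.productMap ψ φ with hG
  have hFG : ∀ t : D ⊗[C] K, G (TensorProduct.comm C D K t) = F t := by
    intro t
    induction t using TensorProduct.induction_on with
    | zero => simp
    | tmul d a =>
      rw [TensorProduct.comm_tmul, hG, hF, Algebra.TensorProduct.productMap_apply_tmul,
        Algebra.TensorProduct.productMap_apply_tmul, mul_comm]
    | add x y hx hy => rw [map_add, map_add, map_add, hx, hy]
  -- G is K-linear
  have hGsmul : ∀ (a : K) (x : K ⊗[C] D), G (a • x) = algebraMap K L a * G x := by
    intro a x
    induction x using TensorProduct.induction_on with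
    | zero => rw [smul_zero, map_zero, mul_zero]
    | tmul k d =>
      rw [TensorProduct.smul_tmul', hG, Algebra.TensorProduct.productMap_apply_tmul,
        Algebra.TensorProduct.productMap_apply_tmul, smul_eq_mul, map_mul, mul_assoc]
      rfl
    | add x y hx hy => rw [smul_add, map_add, map_add, hx, hy, mul_add]
  let Glin : K ⊗[C] D →ₗ[K] L :=
    { toFun := G
      map_add' := fun x y => map_add G x y
      map_smul' := fun a x => by
        change G (a • x) = (RingHom.id K) a • G x
        rw [hGsmul, RingHom.id_apply, Algebra.smul_def] }
  have hGlin : ∀ x, Glin x = G x := fun _ => rfl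
  -- injectivity
  have hker : ∀ t : D ⊗[C] K, F t = 0 → t = 0 := by
    intro t ht
    set b := Module.Basis.ofVectorSpace C D with hb
    set B := b.baseChange K with hB
    set u : K ⊗[C] D := TensorProduct.comm C D K t with hu
    have hGu : G u = 0 := by rw [hu, hFG, ht]
    have hrep := B.linearCombination_repr u
    have h0 : Finsupp.linearCombination K (fun i => algebraMap D L (b i)) (B.repr u) = 0 := by
      have happ := Finsupp.apply_linearCombination K Glin (⇑B) (B.repr u)
      rw [hrep, hGlin, hGu] at happ
      have hfun : (⇑Glin ∘ ⇑B) = fun i => algebraMap D L (b i) := by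
        funext i
        show G (B i) = algebraMap D L (b i)
        rw [hB, Module.Basis.baseChange_apply, hG, Algebra.TensorProduct.productMap_apply_tmul,
          map_one, one_mul]
        rfl
      rw [hfun] at happ
      exact happ.symm
    have hrz : B.repr u = 0 :=
      linearIndependent_iff.mp (li (⇑b) b.linearIndependent) _ h0
    have hu0 : u = 0 := by
      have := congrArg B.repr.symm hrz
      rw [LinearEquiv.symm_apply_apply, map_zero] at this
      exact this
    have := congrArg (TensorProduct.comm C D K).symm hu0
    rw [hu, LinearEquiv.symm_apply_apply, map_zero] at this
    exact this
  constructor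
  · intro x y hxy
    have h0 : F (x - y) = 0 := by rw [map_sub, hxy, sub_self]
    have := hker _ h0
    exact sub_eq_zero.mp this
  · intro t
    induction t using TensorProduct.induction_on with
    | zero =>
      simp only [map_zero]
      exact hdL0.symm
    | tmul d a =>
      rw [LinearMap.lTensor_tmul, hF, Algebra.TensorProduct.productMap_apply_tmul,
        Algebra.TensorProduct.productMap_apply_tmul]
      show algebraMap D L d * algebraMap K L (dK a) = dL (algebraMap D L d * algebraMap K L a)
      rw [hdL_mul, hcompat, hDconst, zero_mul, add_zero]
    | add x y hx hy =>
      rw [map_add, map_add, map_add, hdL_add, hx, hy]
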